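/- Let X be a Banach space with an L-projection P on X'' whose range is (the canonical image of) X, let X_s = ker P, and let (x_γ) be a net in the closed unit ball of X converging weak* in X'' to some x_s ∈ X_s with ‖x_s‖ = 1. Then there is a sequence (x_{γ_n}) extracted from the net which spans ℓ¹ asymptotically isometrically. -/

import Mathlib

/-- The old `NormedSpace.Dual` (removed from Mathlib; same as `StrongDual` but with normed-space
instance arguments). -/
abbrev NormedSpace.Dual (𝕜 : Type*) [NontriviallyNormedField 𝕜] (E : Type*) [SeminormedAddCommGroup E]
    [NormedSpace 𝕜 E] : Type _ :=
  E →L[𝕜] 𝕜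

open NormedSpace Filter Topology

/-- A sequence spans `ℓ¹` asymptotically isometrically. -/
def SpansL1Asymptotically {X : Type*} [NormedAddCommGroup X] [NormedSpace ℝ X]
    (x : ℕ → X) : Prop :=
  ∃ δ : ℕ → ℝ, (∀ n, 0 ≤ δ n ∧ δ n < 1) ∧ Tendsto δ atTop (nhds 0) ∧
    ∀ (N : ℕ) (α : ℕ → ℝ),
      (∑ n ∈ Finset.range N, (1 - δ n) * |α n|) ≤ ‖∑ n ∈ Finset.range N, α n • x n‖ ∧
      ‖∑ n ∈ Finset.range N, α n • x n‖ ≤ ∑ n ∈ Finset.range N, |α n|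

/-- A sequence spans `ℓ¹` almost isometrically. -/
def SpansL1AlmostIsometrically {X : Type*} [NormedAddCommGroup X] [NormedSpace ℝ X]
    (x : ℕ → X) : Prop :=
  ∃ δ : ℕ → ℝ, (∀ n, 0 ≤ δ n ∧ δ n < 1) ∧ Tendsto δ atTop (nhds 0) ∧
    ∀ (m M : ℕ) (α : ℕ → ℝ),
      (1 - δ m) * (∑ n ∈ Finset.Icc m M, |α n|) ≤ ‖∑ n ∈ Finset.Icc m M, α n • x n‖ ∧
      ‖∑ n ∈ Finset.Icc m M, α n • x n‖ ≤ ∑ n ∈ Finset.Icc m M, |α n|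

/-- A sequence spans `c₀` asymptotically isometrically. -/
def SpansC0Asymptotically {X : Type*} [NormedAddCommGroup X] [NormedSpace ℝ X]
    (z : ℕ → X) : Prop :=
  ∃ δ : ℕ → ℝ, (∀ n, 0 ≤ δ n ∧ δ n < 1) ∧ Tendsto δ atTop (nhds 0) ∧
    ∀ (N : ℕ) (hN : N ≠ 0) (α : ℕ → ℝ),
      ((Finset.range N).sup' (Finset.nonempty_range_iff.mpr hN)
          (fun n => (1 - δ n) * |α n|)) ≤ ‖∑ n ∈ Finset.range N, α n • z n‖ ∧
      ‖∑ n ∈ Finset.range N, α n • z n‖ ≤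
        (Finset.range N).sup' (Finset.nonempty_range_iff.mpr hN)
          (fun n => (1 + δ n) * |α n|)

/-- `P` is an L-projection: an idempotent bounded operator with
`‖ξ‖ = ‖Pξ‖ + ‖ξ - Pξ‖` for all `ξ`. -/
def IsLProjection {E : Type*} [NormedAddCommGroup E] [NormedSpace ℝ E]
    (P : E →L[ℝ] E) : Prop :=
  (∀ ξ, P (P ξ) = P ξ) ∧ ∀ ξ, ‖ξ‖ = ‖P ξ‖ + ‖ξ - P ξ‖

/-- `X` is L-embedded: the canonical image of `X` in its bidual is the range of an
L-projection. -/
def IsLEmbedded (X : Type*) [NormedAddCommGroup X] [NormedSpace ℝ X] : Prop :=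
  ∃ P : Dual ℝ (Dual ℝ X) →L[ℝ] Dual ℝ (Dual ℝ X),
    (∀ ξ, P (P ξ) = P ξ) ∧ (∀ ξ, ‖ξ‖ = ‖P ξ‖ + ‖ξ - P ξ‖) ∧
      Set.range P = Set.range (inclusionInDoubleDual ℝ X)

/-- `X` is M-embedded: the annihilator of `X` in `X'''` is the range of an
L-projection on `X'''`. -/
def IsMEmbedded (X : Type*) [NormedAddCommGroup X] [NormedSpace ℝ X] : Prop :=
  ∃ P : Dual ℝ (Dual ℝ (Dual ℝ X)) →L[ℝ] Dual ℝ (Dual ℝ (Dual ℝ X)),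
    (∀ φ, P (P φ) = P φ) ∧ (∀ φ, ‖φ‖ = ‖P φ‖ + ‖φ - P φ‖) ∧
      Set.range P = {φ | ∀ x : X, φ (inclusionInDoubleDual ℝ X x) = 0}

/-- `X` fails the fixed point property: there are a nonempty closed bounded convex set and
a contractive self-map without fixed point. -/
def FailsFPP (X : Type*) [NormedAddCommGroup X] [NormedSpace ℝ X] : Prop :=
  ∃ C : Set X, C.Nonempty ∧ IsClosed C ∧ Bornology.IsBounded C ∧ Convex ℝ C ∧
    ∃ f : X → X, Set.MapsTo f C C ∧
      (∀ x ∈ C, ∀ y ∈ C, x ≠ y → ‖f x - f y‖ < ‖x - y‖) ∧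
      ∀ x ∈ C, f x ≠ x

private lemma lnorm {X : Type*} [NormedAddCommGroup X] [NormedSpace ℝ X]
    (P : Dual ℝ (Dual ℝ X) →L[ℝ] Dual ℝ (Dual ℝ X))
    (hP1 : ∀ ξ, P (P ξ) = P ξ) (hP2 : ∀ ξ, ‖ξ‖ = ‖P ξ‖ + ‖ξ - P ξ‖)
    (hrange : Set.range P = Set.range (inclusionInDoubleDual ℝ X))
    (xs : Dual ℝ (Dual ℝ X)) (hxs : P xs = 0) (hxs1 : ‖xs‖ = 1)
    (y : X) (t : ℝ) :
    ‖inclusionInDoubleDual ℝ X y + t • xs‖ = ‖y‖ + |t| := by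
  have hJy : P (inclusionInDoubleDual ℝ X y) = inclusionInDoubleDual ℝ X y := by
    have hmem : inclusionInDoubleDual ℝ X y ∈ Set.range P := by
      rw [hrange]; exact Set.mem_range_self y
    obtain ⟨ζ, hζ⟩ := hmem
    rw [← hζ, hP1]
  have h1 : P (inclusionInDoubleDual ℝ X y + t • xs) = inclusionInDoubleDual ℝ X y := by
    rw [map_add, map_smul, hxs, smul_zero, add_zero, hJy]
  have hnJ : ‖inclusionInDoubleDual ℝ X y‖ = ‖y‖ := by
    exact (inclusionInDoubleDualLi ℝ (E := X)).norm_map y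
  rw [hP2 (inclusionInDoubleDual ℝ X y + t • xs), h1, add_sub_cancel_left, hnJ,
    norm_smul, hxs1, Real.norm_eq_abs, mul_one]

private lemma geo (a n : ℕ) : (∑ j ∈ Finset.Ico a n, ((1:ℝ)/4)^(j+1)) ≤ (1/4)^a := by
  rcases le_or_gt n a with h | h
  · rw [Finset.Ico_eq_empty (by omega)]
    positivity
  · have key : ∀ m : ℕ, (∑ j ∈ Finset.Ico a (a + m), ((1:ℝ)/4)^(j+1))
        = (1/3) * ((1/4)^a - (1/4)^(a+m)) := by
      intro m
      induction m with
      | zero => simp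
      | succ m ih =>
        rw [← Nat.add_assoc, Finset.sum_Ico_succ_top (Nat.le_add_right a m), ih,
          pow_succ]
        ring
    obtain ⟨m, rfl⟩ := Nat.exists_eq_add_of_le h.le
    rw [key]
    have : (0:ℝ) ≤ (1/4)^(a+m) := by positivity
    have h2 : (0:ℝ) ≤ (1/4)^a := by positivity
    nlinarith
private lemma lnorm' {X : Type*} [NormedAddCommGroup X] [NormedSpace ℝ X]
    (xs : Dual ℝ (Dual ℝ X))
    (hL : ∀ (y : X) (t : ℝ), ‖inclusionInDoubleDual ℝ X y + t • xs‖ = ‖y‖ + |t|)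
    (m : ℕ) (v : Fin m → X) (f : Dual ℝ X) (hf : ‖f‖ ≤ 1)
    (ε : ℝ) (hε : 0 < ε) :
    ∃ g : Dual ℝ X, ‖g‖ ≤ 1 ∧ (∀ i, |g (v i) - f (v i)| ≤ ε) ∧ |xs g - 1| ≤ ε := by
  classical
  set J := inclusionInDoubleDual ℝ X with hJ
  -- the linear map collecting the relevant values
  let Φ : Dual ℝ X →ₗ[ℝ] (Fin m → ℝ) × ℝ :=
    { toFun := fun g => (fun i => g (v i), xs g)
      map_add' := by intro g g'; simp [Prod.ext_iff]; rfl
      map_smul' := by intro c g; simp [Prod.ext_iff]; rfl }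
  let K : Set ((Fin m → ℝ) × ℝ) := Φ '' (Metric.closedBall 0 1)
  have hKconv : Convex ℝ K := (convex_closedBall (0 : Dual ℝ X) 1).linear_image Φ
  set p : (Fin m → ℝ) × ℝ := (fun i => f (v i), 1) with hp_def
  have hp : p ∈ closure K := by
    by_contra hp
    obtain ⟨φ, u, hu1, hu2⟩ :=
      geometric_hahn_banach_closed_point hKconv.closure isClosed_closure hp
    set a : Fin m → ℝ := fun i => φ (Pi.single i 1, 0) with ha
    set t₀ : ℝ := φ ((0 : Fin m → ℝ), 1) with ht₀
    have hdec : ∀ (w : Fin m → ℝ) (t : ℝ),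
        φ (w, t) = (∑ i, w i * a i) + t * t₀ := by
      intro w t
      have hw : ((w, t) : (Fin m → ℝ) × ℝ)
          = (∑ i, w i • ((Pi.single i 1 : Fin m → ℝ), (0:ℝ)))
            + t • ((0 : Fin m → ℝ), (1:ℝ)) := by
        refine Prod.ext ?_ ?_
        · simp only [Prod.fst_sum, Prod.fst_add, Prod.smul_mk, Prod.snd_add]
          funext j
          simp [Finset.sum_apply, Pi.single_apply, mul_ite, Finset.sum_ite_eq]
        · simp [Prod.snd_sum]
      rw [hw, map_add, map_sum]
      simp only [map_smul, smul_eq_mul]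
      rfl
    set y : X := ∑ i, a i • v i with hy
    set ξ : Dual ℝ (Dual ℝ X) := J y + t₀ • xs with hξ
    have hval : ∀ g : Dual ℝ X, ξ g = φ (Φ g) := by
      intro g
      have h1 : ξ g = g y + t₀ * xs g := by
        simp [hξ, hJ, NormedSpace.dual_def]
      have h2 : g y = ∑ i, a i * g (v i) := by
        rw [hy, map_sum]; simp
      have h3 : φ (Φ g) = (∑ i, g (v i) * a i) + xs g * t₀ := hdec _ _
      rw [h1, h2, h3, mul_comm t₀ (xs g)]
      congr 1
      exact Finset.sum_congr rfl fun i _ => mul_comm _ _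
    have hu0 : 0 < u := by
      have h0K : (0 : (Fin m → ℝ) × ℝ) ∈ closure K := by
        apply subset_closure
        exact ⟨0, Metric.mem_closedBall_self zero_le_one, map_zero Φ⟩
      have := hu1 _ h0K
      simpa using this
    have hξle : ‖ξ‖ ≤ u := by
      refine ContinuousLinearMap.opNorm_le_bound _ hu0.le (fun g => ?_)
      rcases eq_or_ne g 0 with rfl | hg
      · simp
      have hgn : 0 < ‖g‖ := norm_pos_iff.2 hg
      have hmem : (‖g‖⁻¹ • g) ∈ Metric.closedBall (0 : Dual ℝ X) 1 := by
        rw [Metric.mem_closedBall, dist_zero_right, norm_smul, norm_inv, norm_norm]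
        rw [inv_mul_cancel₀ hgn.ne']
      have hmem' : (-(‖g‖⁻¹ • g)) ∈ Metric.closedBall (0 : Dual ℝ X) 1 := by
        rwa [Metric.mem_closedBall, dist_zero_right, norm_neg, ← dist_zero_right,
          ← Metric.mem_closedBall]
      have h1 : ξ (‖g‖⁻¹ • g) < u := by
        rw [hval]; exact hu1 _ (subset_closure ⟨_, hmem, rfl⟩)
      have h2 : ξ (-(‖g‖⁻¹ • g)) < u := by
        rw [hval]; exact hu1 _ (subset_closure ⟨_, hmem', rfl⟩)
      rw [map_neg] at h2
      have habs : |ξ (‖g‖⁻¹ • g)| ≤ u := abs_le.2 ⟨by linarith, h1.le⟩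
      have : ξ (‖g‖⁻¹ • g) = ‖g‖⁻¹ * ξ g := by rw [map_smul]; rfl
      rw [this, abs_mul, abs_inv, abs_norm] at habs
      rw [Real.norm_eq_abs]
      calc |ξ g| = ‖g‖ * (‖g‖⁻¹ * |ξ g|) := by field_simp
        _ ≤ ‖g‖ * u := by
            exact mul_le_mul_of_nonneg_left habs (norm_nonneg g)
        _ = u * ‖g‖ := mul_comm _ _
    have hple : φ p ≤ u := by
      have h1 : φ p = f y + t₀ := by
        rw [hp_def, hdec]
        have : f y = ∑ i, f (v i) * a i := by
          rw [hy, map_sum]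
          exact Finset.sum_congr rfl fun i _ => by rw [map_smul]; exact mul_comm _ _
        rw [this]; ring
      have h2 : f y ≤ ‖y‖ := by
        calc f y ≤ |f y| := le_abs_self _
          _ ≤ ‖f‖ * ‖y‖ := f.le_opNorm y
          _ ≤ 1 * ‖y‖ := mul_le_mul_of_nonneg_right hf (norm_nonneg _)
          _ = ‖y‖ := one_mul _
      have h3 : t₀ ≤ |t₀| := le_abs_self _
      have h4 : ‖y‖ + |t₀| = ‖ξ‖ := (hL y t₀).symm
      linarith
    exact absurd hu2 (not_lt.2 hple)
  rw [Metric.mem_closure_iff] at hp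
  obtain ⟨q, hqK, hq⟩ := hp ε hε
  obtain ⟨g, hgball, rfl⟩ := hqK
  refine ⟨g, ?_, ?_, ?_⟩
  · rwa [Metric.mem_closedBall, dist_zero_right] at hgball
  · intro i
    have h1 : dist (p.1 i) ((Φ g).1 i) ≤ dist p (Φ g) := by
      calc dist (p.1 i) ((Φ g).1 i) ≤ dist p.1 (Φ g).1 := dist_le_pi_dist _ _ i
        _ ≤ dist p (Φ g) := le_max_left _ _ |>.trans_eq (Prod.dist_eq).symm
    have : dist (p.1 i) ((Φ g).1 i) < ε := lt_of_le_of_lt h1 hq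
    rw [Real.dist_eq] at this
    rw [abs_sub_comm]
    exact le_of_lt (by simpa [Φ, hp_def] using this)
  · have h1 : dist p.2 (Φ g).2 ≤ dist p (Φ g) := by
      calc dist p.2 (Φ g).2 ≤ max (dist p.1 (Φ g).1) (dist p.2 (Φ g).2) := le_max_right _ _
        _ = dist p (Φ g) := (Prod.dist_eq).symm
    have : dist p.2 (Φ g).2 < ε := lt_of_le_of_lt h1 hq
    rw [Real.dist_eq] at this
    rw [abs_sub_comm]
    exact le_of_lt (by simpa [Φ, hp_def] using this)

theorem stmt5 {X : Type*} [NormedAddCommGroup X] [NormedSpace ℝ X] [CompleteSpace X] {Γ : Type*} [Nonempty Γ] [SemilatticeSup Γ]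
    (P : Dual ℝ (Dual ℝ X) →L[ℝ] Dual ℝ (Dual ℝ X))
    (hP : (∀ ξ, P (P ξ) = P ξ) ∧ ∀ ξ, ‖ξ‖ = ‖P ξ‖ + ‖ξ - P ξ‖)
    (hrange : Set.range P = Set.range (inclusionInDoubleDual ℝ X))
    (x : Γ → X) (hx : ∀ γ, ‖x γ‖ ≤ 1)
    (xs : Dual ℝ (Dual ℝ X)) (hxs : P xs = 0) (hxs1 : ‖xs‖ = 1)
    (hconv : ∀ f : Dual ℝ X,
      Tendsto (fun γ => inclusionInDoubleDual ℝ X (x γ) f) atTop (nhds (xs f))) :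
    ∃ γ : ℕ → Γ, SpansL1Asymptotically (fun n => x (γ n)) := by
  classical
  obtain ⟨hP1, hP2⟩ := hP
  have hL : ∀ (y : X) (t : ℝ), ‖inclusionInDoubleDual ℝ X y + t • xs‖ = ‖y‖ + |t| :=
    lnorm P hP1 hP2 hrange xs hxs hxs1
  set ε : ℕ → ℝ := fun n => (1/4 : ℝ)^(n+1) with hε_def
  have hεpos : ∀ n, 0 < ε n := fun n => by simp only [hε_def]; positivity
  set e : ℕ → ℕ → ℝ := fun k n => 2 * ε k + ∑ j ∈ Finset.Ico (k+1) n, ε j with he_def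
  set δ : ℕ → ℝ := fun n => 3 * (1/4 : ℝ)^(n+1) with hδ_def
  have heδ : ∀ k n, e k n ≤ δ k := by
    intro k n
    have h := geo (k+1) n
    simp only [he_def, hδ_def, hε_def]
    linarith [h]
  set Inv : ℕ → (ℕ → Γ) → Prop := fun n v => ∀ b : ℕ → Bool,
    ∃ g : Dual ℝ X, ‖g‖ ≤ 1 ∧
      ∀ k < n, 1 - e k n ≤ (if b k then (1:ℝ) else -1) * g (x (v k)) with hInv
  have base : Inv 0 (fun _ => Classical.arbitrary Γ) := by
    intro b; exact ⟨0, by simp, fun k hk => absurd hk (Nat.not_lt_zero k)⟩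
  have step : ∀ n (v : ℕ → Γ), Inv n v → ∃ γ', Inv (n+1) (Function.update v n γ') := by
    intro n v hv
    have hB : ∀ c : Fin n → Bool, ∃ h : Dual ℝ X, ‖h‖ ≤ 1 ∧
        (∀ k : Fin n, 1 - (e k n + ε n) ≤ (if c k then (1:ℝ) else -1) * h (x (v k))) ∧
        |xs h - 1| ≤ ε n := by
      intro c
      set bc : ℕ → Bool := fun k => if hk : k < n then c ⟨k, hk⟩ else true with hbc
      obtain ⟨g, hg1, hg2⟩ := hv bc
      obtain ⟨h, hh1, hh2, hh3⟩ := lnorm' xs hL n (fun i => x (v i)) g hg1 (ε n) (hεpos n)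
      refine ⟨h, hh1, ?_, hh3⟩
      intro k
      have hb : bc (k : ℕ) = c k := by simp [hbc, k.isLt]
      have h1 := hg2 k k.isLt
      rw [hb] at h1
      have hs : |(if c k then (1:ℝ) else -1)| = 1 := by split_ifs <;> norm_num
      have key : |(if c k then (1:ℝ) else -1) * h (x (v k))
          - (if c k then (1:ℝ) else -1) * g (x (v k))| ≤ ε n := by
        rw [← mul_sub, abs_mul, hs, one_mul]; exact hh2 k
      obtain ⟨key1, key2⟩ := abs_le.1 key
      linarith [h1]
    choose h hh1 hh2 hh3 using hB
    have hev : ∀ᶠ γ in atTop, ∀ c : Fin n → Bool, |h c (x γ) - xs (h c)| < ε n := by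
      rw [eventually_all]
      intro c
      have ht := Metric.tendsto_nhds.mp (hconv (h c)) (ε n) (hεpos n)
      refine ht.mono fun γ hγ => ?_
      rw [Real.dist_eq] at hγ
      simpa [NormedSpace.dual_def] using hγ
    obtain ⟨γ', hγ'⟩ := hev.exists
    refine ⟨γ', ?_⟩
    intro b
    set c : Fin n → Bool := fun i => b i == b n with hc
    set σ : ℝ := if b n then 1 else -1 with hσ
    refine ⟨σ • h c, ?_, ?_⟩
    · rw [norm_smul]
      have hσ1 : ‖σ‖ = 1 := by simp only [hσ]; split_ifs <;> norm_num
      rw [hσ1, one_mul]; exact hh1 c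
    · intro k hk
      rcases Nat.lt_succ_iff_lt_or_eq.1 hk with hk' | hk'
      · have hupd : Function.update v n γ' k = v k := Function.update_of_ne (by omega) _ _
        have hsign : (if b k then (1:ℝ) else -1) * σ = (if c ⟨k, hk'⟩ then (1:ℝ) else -1) := by
          simp only [hσ, hc]
          cases hb1 : b k <;> cases hb2 : b n <;> norm_num [hb1, hb2]
        have h2 := hh2 c ⟨k, hk'⟩
        have hen : e k (n+1) = e k n + ε n := by
          simp only [he_def]
          rw [Finset.sum_Ico_succ_top (by omega)]
          ring
        rw [hupd]
        calc 1 - e k (n+1) = 1 - (e k n + ε n) := by rw [hen]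
          _ ≤ (if c ⟨k, hk'⟩ then (1:ℝ) else -1) * h c (x (v k)) := h2
          _ = (if b k then (1:ℝ) else -1) * ((σ • h c) (x (v k))) := by
              rw [← hsign]
              simp only [ContinuousLinearMap.smul_apply, smul_eq_mul]
              ring
      · subst hk'
        have hupd : Function.update v k γ' k = γ' := Function.update_self _ _ _
        have h3 := hh3 c
        have h4 := hγ' c
        have hen : e k (k+1) = 2 * ε k := by simp [he_def]
        have hσ2 : (if b k then (1:ℝ) else -1) * ((σ • h c) (x γ')) = h c (x γ') := by
          simp only [hσ, ContinuousLinearMap.smul_apply, smul_eq_mul]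
          split_ifs <;> ring
        rw [hupd, hσ2, hen]
        obtain ⟨h3a, h3b⟩ := abs_le.1 h3
        obtain ⟨h4a, h4b⟩ := abs_lt.1 h4
        linarith
  let T : ∀ n : ℕ, {v : ℕ → Γ // Inv n v} := fun n =>
    Nat.rec (motive := fun n => {v : ℕ → Γ // Inv n v})
      ⟨fun _ => Classical.arbitrary Γ, base⟩
      (fun n p => ⟨Function.update p.1 n (step n p.1 p.2).choose,
        (step n p.1 p.2).choose_spec⟩) n
  let γseq : ℕ → Γ := fun n => (T (n+1)).1 n
  have hTsucc : ∀ n, (T (n+1)).1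
      = Function.update (T n).1 n (step n (T n).1 (T n).2).choose := fun n => rfl
  have hcompat : ∀ m k, k < m → (T m).1 k = γseq k := by
    intro m
    induction m with
    | zero => exact fun k hk => absurd hk (Nat.not_lt_zero k)
    | succ m ih =>
      intro k hk
      rcases Nat.lt_succ_iff_lt_or_eq.1 hk with hk' | rfl
      · rw [hTsucc m, Function.update_of_ne (by omega)]
        exact ih k hk'
      · rfl
  refine ⟨γseq, δ, ?_, ?_, ?_⟩
  · intro n
    constructor
    · simp only [hδ_def]; positivity
    · have h : ((1:ℝ)/4)^(n+1) ≤ 1/4 := by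
        have h2 := pow_le_pow_of_le_one (by norm_num : (0:ℝ) ≤ 1/4) (by norm_num)
          (by omega : 1 ≤ n + 1)
        simpa using h2
      simp only [hδ_def]
      linarith
  · have h0 : Tendsto (fun n : ℕ => ((1:ℝ)/4)^n) atTop (nhds 0) :=
      tendsto_pow_atTop_nhds_zero_of_lt_one (by norm_num) (by norm_num)
    have h1 := h0.const_mul (3 * (1/4 : ℝ))
    rw [mul_zero] at h1
    refine Tendsto.congr (fun n => ?_) h1
    simp only [hδ_def]
    rw [pow_succ]
    ring
  · intro N α
    constructor
    · obtain ⟨g, hg1, hg2⟩ := (T N).2 (fun k => decide (0 ≤ α k))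
      have key : ∀ k ∈ Finset.range N, (1 - δ k) * |α k| ≤ α k * g (x (γseq k)) := by
        intro k hk
        rw [Finset.mem_range] at hk
        have h1 := hg2 k hk
        rw [hcompat N k hk] at h1
        have hαs : α k = (if (decide (0 ≤ α k)) then (1:ℝ) else -1) * |α k| := by
          rcases le_or_gt 0 (α k) with h | h
          · simp [h, abs_of_nonneg h]
          · simp [not_le.2 h, abs_of_neg h]
        have hsg : 1 - δ k ≤ (if (decide (0 ≤ α k)) then (1:ℝ) else -1) * g (x (γseq k)) :=
          le_trans (by linarith [heδ k N]) h1
        calc (1 - δ k) * |α k|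
            ≤ ((if (decide (0 ≤ α k)) then (1:ℝ) else -1) * g (x (γseq k))) * |α k| :=
              mul_le_mul_of_nonneg_right hsg (abs_nonneg _)
          _ = α k * g (x (γseq k)) := by
              conv_rhs => rw [hαs]
              ring
      calc ∑ n ∈ Finset.range N, (1 - δ n) * |α n|
          ≤ ∑ n ∈ Finset.range N, α n * g (x (γseq n)) := Finset.sum_le_sum key
        _ = g (∑ n ∈ Finset.range N, α n • x (γseq n)) := by
            rw [map_sum]
            exact Finset.sum_congr rfl fun n _ => by rw [map_smul, smul_eq_mul]
        _ ≤ ‖∑ n ∈ Finset.range N, α n • x (γseq n)‖ := by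
            set z := ∑ n ∈ Finset.range N, α n • x (γseq n)
            calc g z ≤ |g z| := le_abs_self _
              _ ≤ ‖g‖ * ‖z‖ := g.le_opNorm z
              _ ≤ 1 * ‖z‖ := mul_le_mul_of_nonneg_right hg1 (norm_nonneg _)
              _ = ‖z‖ := one_mul _
    · calc ‖∑ n ∈ Finset.range N, α n • x (γseq n)‖
          ≤ ∑ n ∈ Finset.range N, ‖α n • x (γseq n)‖ := norm_sum_le _ _
        _ ≤ ∑ n ∈ Finset.range N, |α n| := by
            apply Finset.sum_le_sum
            intro n _
            rw [norm_smul, Real.norm_eq_abs]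
            calc |α n| * ‖x (γseq n)‖ ≤ |α n| * 1 :=
                  mul_le_mul_of_nonneg_left (hx _) (abs_nonneg _)
              _ = |α n| := mul_one _
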